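/- Let T = T1 ∨ T2 and V' = V'_1 ⊔ V'_2 ⊆ V(T) with V'_i ⊆ V(T_i), not containing the bottom vertex. Then γ(T, V') = γ(T1, V'_1) ⊔ γ(T2, V'_2), i.e., γ(T,V') is the set of disjoint unions F1 ⊔ F2 with F_i ∈ γ(T_i, V'_i). -/
import Mathlib


open Finset

/-- A forest of leaf-labeled rooted binary trees on a ground set of labels,
encoded by the family of "clades": for each inner vertex, the set of its
ancestor leaves. Laminarity plus the binary splitting condition exactly
characterize such forests, and inner vertices correspond bijectively to clades. -/
structure Forest (I : Type*) [DecidableEq I] where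
  ground : Finset I
  clades : Finset (Finset I)
  subset_ground : ∀ C ∈ clades, C ⊆ ground
  laminar : ∀ C ∈ clades, ∀ D ∈ clades, C ⊆ D ∨ D ⊆ C ∨ Disjoint C D
  binary : ∀ C ∈ clades, ∃ A B : Finset I,
      (A ∈ clades ∨ ∃ x, A = {x}) ∧ (B ∈ clades ∨ ∃ x, B = {x}) ∧
      Disjoint A B ∧ A ∪ B = C ∧ A ≠ C ∧ B ≠ C

namespace Forest

variable {I : Type*} [DecidableEq I]

/-- The partial order on forests of the paper: `F' ≤ F` iff there is an injection
of the inner vertices of `F'` into those of `F` which enlarges ancestor-leaf sets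
and preserves the ancestor relation among inner vertices. -/
def Le (F' F : Forest I) : Prop :=
  F'.ground = F.ground ∧ ∃ φ : Finset I → Finset I,
    Set.InjOn φ (F'.clades : Set (Finset I)) ∧
    (∀ C ∈ F'.clades, φ C ∈ F.clades) ∧
    (∀ C ∈ F'.clades, C ⊆ φ C) ∧
    (∀ C ∈ F'.clades, ∀ D ∈ F'.clades, C ⊆ D → φ C ⊆ φ D)

/-- `γ(F,V)`: the set of forests `F' ≤ F` whose inner vertices are identified,
via the order-defining injection, with the subset `V` of inner vertices of `F`. -/
def gamma (F : Forest I) (V : Finset (Finset I)) : Set (Forest I) :=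
  {F' | F'.ground = F.ground ∧ ∃ φ : Finset I → Finset I,
    Set.InjOn φ (F'.clades : Set (Finset I)) ∧
    (∀ C ∈ F'.clades, φ C ∈ F.clades) ∧
    (∀ C ∈ F'.clades, C ⊆ φ C) ∧
    (∀ C ∈ F'.clades, ∀ D ∈ F'.clades, C ⊆ D → φ C ⊆ φ D) ∧
    F'.clades.image φ = V}

/-- A forest consisting of a single tree. -/
def IsTree (F : Forest I) : Prop :=
  F.ground.Nonempty ∧ (F.ground ∈ F.clades ∨ F.ground.card = 1)

/-- The support: leaves whose path to the root contains at least one inner vertex. -/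
def supp (F : Forest I) : Finset I := F.clades.sup id

/-- The leaf-label sets of the trees of the forest: maximal clades together with
the singletons of labels not lying in any clade. -/
def rootBlocks (F : Forest I) : Finset (Finset I) :=
  F.clades.filter (fun C => ∀ D ∈ F.clades, C ⊆ D → C = D) ∪
  (F.ground.filter (fun x => ∀ C ∈ F.clades, x ∉ C)).image
    (fun x => ({x} : Finset I))

end Forest


lemma Forest.clade_nonempty {I : Type*} [DecidableEq I] (F : Forest I) {C : Finset I}
    (hC : C ∈ F.clades) : C.Nonempty := by
  rcases C.eq_empty_or_nonempty with rfl | h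
  · obtain ⟨A, B, _, _, _, hAB, hA, _⟩ := F.binary ∅ hC
    rw [Finset.union_eq_empty] at hAB
    exact absurd hAB.1 hA
  · exact h

/-- for `T = T1 ∨ T2` and `V' = V1 ⊔ V2` not containing the bottom
vertex, `γ(T, V') = γ(T1,V1) ⊔ γ(T2,V2)`: the elements of `γ(T,V')` are exactly
the disjoint unions `F1 ⊔ F2` with `F1 ∈ γ(T1,V1)` and `F2 ∈ γ(T2,V2)`. -/
theorem stmt_11 (I : Type*) [DecidableEq I] (T T1 T2 : Forest I)
    (h1 : T1.IsTree) (h2 : T2.IsTree) (hd : Disjoint T1.ground T2.ground)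
    (hg : T.ground = T1.ground ∪ T2.ground)
    (hc : T.clades = insert T.ground (T1.clades ∪ T2.clades))
    (V1 V2 : Finset (Finset I)) (hV1 : V1 ⊆ T1.clades) (hV2 : V2 ⊆ T2.clades) :
    Forest.gamma T (V1 ∪ V2) =
      {F : Forest I | ∃ F1 ∈ Forest.gamma T1 V1, ∃ F2 ∈ Forest.gamma T2 V2,
        F.ground = F1.ground ∪ F2.ground ∧ F.clades = F1.clades ∪ F2.clades} := by

  have hc1 : ∀ C ∈ T1.clades, C ⊆ T1.ground := T1.subset_ground
  have hc2 : ∀ C ∈ T2.clades, C ⊆ T2.ground := T2.subset_ground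
  ext F'
  simp only [Set.mem_setOf_eq]
  constructor
  · rintro ⟨hgr, φ, hinj, hmem, hext, hmono, himg⟩
    have hφV : ∀ C ∈ F'.clades, φ C ∈ V1 ∪ V2 := fun C hC => by
      rw [← himg]; exact Finset.mem_image_of_mem φ hC
    -- key dichotomy
    have key1 : ∀ C ∈ F'.clades, C ⊆ T1.ground → φ C ∈ V1 := by
      intro C hC hsub
      rcases Finset.mem_union.1 (hφV C hC) with h | h
      · exact h
      · exfalso
        obtain ⟨x, hx⟩ := F'.clade_nonempty hC
        exact (Finset.disjoint_left.1 hd) (hsub hx) ((hc2 _ (hV2 h)) (hext C hC hx))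
    have key2 : ∀ C ∈ F'.clades, C ⊆ T2.ground → φ C ∈ V2 := by
      intro C hC hsub
      rcases Finset.mem_union.1 (hφV C hC) with h | h
      · exfalso
        obtain ⟨x, hx⟩ := F'.clade_nonempty hC
        exact (Finset.disjoint_left.1 hd) ((hc1 _ (hV1 h)) (hext C hC hx)) (hsub hx)
      · exact h
    have dichotomy : ∀ C ∈ F'.clades, C ⊆ T1.ground ∨ C ⊆ T2.ground := by
      intro C hC
      rcases Finset.mem_union.1 (hφV C hC) with h | h
      · exact Or.inl ((hext C hC).trans (hc1 _ (hV1 h)))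
      · exact Or.inr ((hext C hC).trans (hc2 _ (hV2 h)))
    -- construct the two restricted forests
    have mkForest : ∀ G : Finset I, (∀ C ∈ F'.clades.filter (· ⊆ G), C ⊆ G) → Forest I := by
      intro G hG
      refine ⟨G, F'.clades.filter (· ⊆ G), hG, ?_, ?_⟩
      · intro C hC D hD
        exact F'.laminar C (Finset.mem_filter.1 hC).1 D (Finset.mem_filter.1 hD).1
      · intro C hC
        obtain ⟨hC', hCG⟩ := Finset.mem_filter.1 hC
        obtain ⟨A, B, hA, hB, hABd, hAB, hAne, hBne⟩ := F'.binary C hC'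
        refine ⟨A, B, ?_, ?_, hABd, hAB, hAne, hBne⟩
        · rcases hA with h | h
          · exact Or.inl (Finset.mem_filter.2 ⟨h, (hAB ▸ Finset.subset_union_left).trans hCG⟩)
          · exact Or.inr h
        · rcases hB with h | h
          · exact Or.inl (Finset.mem_filter.2 ⟨h, (hAB ▸ Finset.subset_union_right).trans hCG⟩)
          · exact Or.inr h
    have hGfun : ∀ G : Finset I, ∀ C ∈ F'.clades.filter (· ⊆ G), C ⊆ G := by
      intro G C hC; exact (Finset.mem_filter.1 hC).2
    refine ⟨{ ground := T1.ground, clades := F'.clades.filter (· ⊆ T1.ground),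
              subset_ground := hGfun T1.ground,
              laminar := fun C hC D hD =>
                F'.laminar C (Finset.mem_filter.1 hC).1 D (Finset.mem_filter.1 hD).1,
              binary := ?_ }, ⟨rfl, φ, ?_, ?_, ?_, ?_, ?_⟩,
            { ground := T2.ground, clades := F'.clades.filter (· ⊆ T2.ground),
              subset_ground := hGfun T2.ground,
              laminar := fun C hC D hD =>
                F'.laminar C (Finset.mem_filter.1 hC).1 D (Finset.mem_filter.1 hD).1,
              binary := ?_ }, ⟨rfl, φ, ?_, ?_, ?_, ?_, ?_⟩, ?_, ?_⟩
    · -- binary for F1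
      intro C hC
      obtain ⟨hC', hCG⟩ := Finset.mem_filter.1 hC
      obtain ⟨A, B, hA, hB, hABd, hAB, hAne, hBne⟩ := F'.binary C hC'
      refine ⟨A, B, ?_, ?_, hABd, hAB, hAne, hBne⟩
      · rcases hA with h | h
        · exact Or.inl (Finset.mem_filter.2 ⟨h, (hAB ▸ Finset.subset_union_left).trans hCG⟩)
        · exact Or.inr h
      · rcases hB with h | h
        · exact Or.inl (Finset.mem_filter.2 ⟨h, (hAB ▸ Finset.subset_union_right).trans hCG⟩)
        · exact Or.inr h
    · exact hinj.mono (by simp only [Finset.coe_subset]; exact Finset.filter_subset _ _)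
    · intro C hC
      obtain ⟨hC', hCG⟩ := Finset.mem_filter.1 hC
      exact hV1 (key1 C hC' hCG)
    · intro C hC; exact hext C (Finset.mem_filter.1 hC).1
    · intro C hC D hD h
      exact hmono C (Finset.mem_filter.1 hC).1 D (Finset.mem_filter.1 hD).1 h
    · -- image = V1
      apply subset_antisymm
      · intro D hD
        obtain ⟨C, hC, rfl⟩ := Finset.mem_image.1 hD
        obtain ⟨hC', hCG⟩ := Finset.mem_filter.1 hC
        exact key1 C hC' hCG
      · intro D hD
        have : D ∈ F'.clades.image φ := himg ▸ Finset.mem_union_left _ hD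
        obtain ⟨C, hC, rfl⟩ := Finset.mem_image.1 this
        exact Finset.mem_image.2 ⟨C, Finset.mem_filter.2
          ⟨hC, (hext C hC).trans (hc1 _ (hV1 hD))⟩, rfl⟩
    · -- binary for F2
      intro C hC
      obtain ⟨hC', hCG⟩ := Finset.mem_filter.1 hC
      obtain ⟨A, B, hA, hB, hABd, hAB, hAne, hBne⟩ := F'.binary C hC'
      refine ⟨A, B, ?_, ?_, hABd, hAB, hAne, hBne⟩
      · rcases hA with h | h
        · exact Or.inl (Finset.mem_filter.2 ⟨h, (hAB ▸ Finset.subset_union_left).trans hCG⟩)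
        · exact Or.inr h
      · rcases hB with h | h
        · exact Or.inl (Finset.mem_filter.2 ⟨h, (hAB ▸ Finset.subset_union_right).trans hCG⟩)
        · exact Or.inr h
    · exact hinj.mono (by simp only [Finset.coe_subset]; exact Finset.filter_subset _ _)
    · intro C hC
      obtain ⟨hC', hCG⟩ := Finset.mem_filter.1 hC
      exact hV2 (key2 C hC' hCG)
    · intro C hC; exact hext C (Finset.mem_filter.1 hC).1
    · intro C hC D hD h
      exact hmono C (Finset.mem_filter.1 hC).1 D (Finset.mem_filter.1 hD).1 h
    · -- image = V2
      apply subset_antisymm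
      · intro D hD
        obtain ⟨C, hC, rfl⟩ := Finset.mem_image.1 hD
        obtain ⟨hC', hCG⟩ := Finset.mem_filter.1 hC
        exact key2 C hC' hCG
      · intro D hD
        have : D ∈ F'.clades.image φ := himg ▸ Finset.mem_union_right _ hD
        obtain ⟨C, hC, rfl⟩ := Finset.mem_image.1 this
        exact Finset.mem_image.2 ⟨C, Finset.mem_filter.2
          ⟨hC, (hext C hC).trans (hc2 _ (hV2 hD))⟩, rfl⟩
    · simpa using hgr.trans hg
    · -- clades = union of filters
      apply subset_antisymm
      · intro C hC
        rcases dichotomy C hC with h | h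
        · exact Finset.mem_union_left _ (Finset.mem_filter.2 ⟨hC, h⟩)
        · exact Finset.mem_union_right _ (Finset.mem_filter.2 ⟨hC, h⟩)
      · intro C hC
        rcases Finset.mem_union.1 hC with h | h
        · exact (Finset.mem_filter.1 h).1
        · exact (Finset.mem_filter.1 h).1
  · rintro ⟨F1, ⟨hg1, φ1, hinj1, hmem1, hext1, hmono1, himg1⟩,
           F2, ⟨hg2, φ2, hinj2, hmem2, hext2, hmono2, himg2⟩, hFg, hFc⟩
    have hF1g : ∀ C ∈ F1.clades, C ⊆ T1.ground := fun C hC => hg1 ▸ F1.subset_ground C hC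
    have hF2g : ∀ C ∈ F2.clades, C ⊆ T2.ground := fun C hC => hg2 ▸ F2.subset_ground C hC
    have hF2n : ∀ C ∈ F2.clades, ¬ C ⊆ T1.ground := by
      intro C hC h
      obtain ⟨x, hx⟩ := F2.clade_nonempty hC
      exact (Finset.disjoint_left.1 hd) (h hx) (hF2g C hC hx)
    set φ : Finset I → Finset I := fun C => if C ⊆ T1.ground then φ1 C else φ2 C with hφ
    have hφ1 : ∀ C ∈ F1.clades, φ C = φ1 C := fun C hC => if_pos (hF1g C hC)
    have hφ2 : ∀ C ∈ F2.clades, φ C = φ2 C := fun C hC => if_neg (hF2n C hC)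
    have hval1 : ∀ C ∈ F1.clades, φ C ∈ T1.clades := fun C hC => hφ1 C hC ▸ hmem1 C hC
    have hval2 : ∀ C ∈ F2.clades, φ C ∈ T2.clades := fun C hC => hφ2 C hC ▸ hmem2 C hC
    have hdisj : ∀ C ∈ F1.clades, ∀ D ∈ F2.clades, φ C ≠ φ D := by
      intro C hC D hD h
      obtain ⟨x, hx⟩ := T1.clade_nonempty (hval1 C hC)
      exact (Finset.disjoint_left.1 hd) (hc1 _ (hval1 C hC) hx)
        (hc2 _ (hval2 D hD) (h ▸ hx))
    refine ⟨by rw [hFg, hg1, hg2, hg], φ, ?_, ?_, ?_, ?_, ?_⟩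
    · intro C hC D hD h
      rw [Finset.mem_coe, hFc, Finset.mem_union] at hC hD
      rcases hC with hC | hC <;> rcases hD with hD | hD
      · exact hinj1 hC hD (by rwa [hφ1 C hC, hφ1 D hD] at h)
      · exact absurd h (hdisj C hC D hD)
      · exact absurd h.symm (hdisj D hD C hC)
      · exact hinj2 hC hD (by rwa [hφ2 C hC, hφ2 D hD] at h)
    · intro C hC
      rw [hFc, Finset.mem_union] at hC
      rw [hc]
      rcases hC with hC | hC
      · exact Finset.mem_insert_of_mem (Finset.mem_union_left _ (hval1 C hC))
      · exact Finset.mem_insert_of_mem (Finset.mem_union_right _ (hval2 C hC))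
    · intro C hC
      rw [hFc, Finset.mem_union] at hC
      rcases hC with hC | hC
      · exact (hφ1 C hC).symm ▸ hext1 C hC
      · exact (hφ2 C hC).symm ▸ hext2 C hC
    · intro C hC D hD h
      rw [hFc, Finset.mem_union] at hC hD
      rcases hC with hC | hC <;> rcases hD with hD | hD
      · rw [hφ1 C hC, hφ1 D hD]; exact hmono1 C hC D hD h
      · exfalso
        obtain ⟨x, hx⟩ := F1.clade_nonempty hC
        exact (Finset.disjoint_left.1 hd) (hF1g C hC hx) (hF2g D hD (h hx))
      · exfalso
        obtain ⟨x, hx⟩ := F2.clade_nonempty hC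
        exact (Finset.disjoint_left.1 hd) (hF1g D hD (h hx)) (hF2g C hC hx)
      · rw [hφ2 C hC, hφ2 D hD]; exact hmono2 C hC D hD h
    · rw [hFc, Finset.image_union, Finset.image_congr (fun C hC => hφ1 C hC),
        Finset.image_congr (fun C hC => hφ2 C hC), himg1, himg2]
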